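/- If G is a triangle-free finite simple graph of maximum degree at most 3 that admits a 0-bend CPG representation, then the 2-subdivision of G also admits a 0-bend CPG representation. -/

import Mathlib

/-! ## Grid paths and CPG representations -/

/-- Two grid points of `ℤ × ℤ` at L¹-distance 1 (i.e. joined by a unit grid segment). -/
def GridStep (p q : ℤ × ℤ) : Prop :=
  (p.1 - q.1).natAbs + (p.2 - q.2).natAbs = 1

/-- A grid path: a sequence of at least two grid points, consecutive points at distance 1,
with no repeated grid point (so the traced curve neither crosses nor retraces itself). -/
structure GridPath where
  pts : List (ℤ × ℤ)
  two_le_length : 2 ≤ pts.length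
  step : pts.Chain' GridStep
  nodup : pts.Nodup

namespace GridPath

theorem ne_nil (P : GridPath) : P.pts ≠ [] := by
  intro h
  have h2 := P.two_le_length
  rw [h] at h2
  simp at h2

/-- The set of grid points of a grid path. -/
def toSet (P : GridPath) : Set (ℤ × ℤ) := {p | p ∈ P.pts}

/-- The first extreme point of a grid path. -/
def first (P : GridPath) : ℤ × ℤ := P.pts.head P.ne_nil

/-- The second extreme point of a grid path. -/
def last (P : GridPath) : ℤ × ℤ := P.pts.getLast P.ne_nil

/-- `p` is an endpoint (extreme point) of the grid path `P`. -/
def IsEndpoint (P : GridPath) (p : ℤ × ℤ) : Prop := p = P.first ∨ p = P.last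

/-- `p` is an interior grid point of `P`: it lies on `P` but is not an endpoint. -/
def IsInterior (P : GridPath) (p : ℤ × ℤ) : Prop := p ∈ P.toSet ∧ ¬ P.IsEndpoint p

/-- `p` is a bend of `P`: an interior grid point at which `P` turns 90 degrees. -/
def IsBend (P : GridPath) (p : ℤ × ℤ) : Prop :=
  ∃ a c : ℤ × ℤ, [a, p, c] <:+: P.pts ∧ a.1 ≠ c.1 ∧ a.2 ≠ c.2

/-- The set of bend points of `P`. -/
def bendSet (P : GridPath) : Set (ℤ × ℤ) := {p | P.IsBend p}

/-- `P` has at most `k` bends. -/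
def BendsAtMost (P : GridPath) (k : ℕ) : Prop := P.bendSet.ncard ≤ k

end GridPath

/-- `p` and `q` are consecutive grid points of the list `l` (in either order);
equivalently, the path traced by `l` uses the unit grid segment joining `p` and `q`. -/
def ConsecIn (l : List (ℤ × ℤ)) (p q : ℤ × ℤ) : Prop :=
  [p, q] <:+: l ∨ [q, p] <:+: l

/-- A CPG representation of a simple graph `G`: a family of pairwise interiorly disjoint
grid paths, one for each vertex, such that two distinct vertices are adjacent iff the
corresponding paths have a common point. -/
structure CPGRep {V : Type*} (G : SimpleGraph V) where
  path : V → GridPath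
  interiorly_disjoint : ∀ u v : V, u ≠ v → ∀ p : ℤ × ℤ,
    p ∈ (path u).toSet → p ∈ (path v).toSet →
    (path u).IsEndpoint p ∨ (path v).IsEndpoint p
  no_shared_segment : ∀ u v : V, u ≠ v → ∀ p q : ℤ × ℤ,
    ConsecIn (path u).pts p q → ¬ ConsecIn (path v).pts p q
  adj_iff : ∀ u v : V, u ≠ v →
    (G.Adj u v ↔ ∃ p : ℤ × ℤ, p ∈ (path u).toSet ∧ p ∈ (path v).toSet)

namespace CPGRep

variable {V : Type*} {G : SimpleGraph V}

/-- A `k`-bend CPG representation: every path has at most `k` bends. -/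
def BendsAtMost (R : CPGRep G) (k : ℕ) : Prop :=
  ∀ u : V, (R.path u).BendsAtMost k

/-- `p` is a free endpoint of the path of `u`: an endpoint of `R.path u`
belonging to no other path of the representation. -/
def FreeEndpoint (R : CPGRep G) (u : V) (p : ℤ × ℤ) : Prop :=
  (R.path u).IsEndpoint p ∧ ∀ v : V, v ≠ u → p ∉ (R.path v).toSet

end CPGRep

/-- A graph is CPG if it admits a CPG representation. -/
def IsCPG {V : Type*} (G : SimpleGraph V) : Prop := Nonempty (CPGRep G)

/-- A graph is `B_k`-CPG if it admits a CPG representation in which every path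
has at most `k` bends. -/
def IsBkCPG {V : Type*} (G : SimpleGraph V) (k : ℕ) : Prop :=
  ∃ R : CPGRep G, R.BendsAtMost k

/-! ## The 2-subdivision -/

/-- The vertex type of the 2-subdivision of `G`: the original vertices, together with, for
every edge `uv` of `G`, the two new vertices `(u, v)` (the subdivision vertex adjacent
to `u`) and `(v, u)` (the one adjacent to `v`). -/
def SubdivV {V : Type*} (G : SimpleGraph V) : Type _ :=
  V ⊕ {p : V × V // G.Adj p.1 p.2}

/-- The defining relation of the 2-subdivision: every edge `uv` of `G` is replaced by the
path `u — (u,v) — (v,u) — v`. -/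
def twoSubRel {V : Type*} (G : SimpleGraph V) : SubdivV G → SubdivV G → Prop
  | Sum.inl u, Sum.inr e => e.1.1 = u
  | Sum.inr e, Sum.inr g => e.1.1 = g.1.2 ∧ e.1.2 = g.1.1
  | _, _ => False

/-- The 2-subdivision of `G`: every edge `uv` is replaced by a path `u — x_{uv} — y_{uv} — v`
with two new vertices. -/
def twoSubdivision {V : Type*} (G : SimpleGraph V) : SimpleGraph (SubdivV G) :=
  SimpleGraph.fromRel (twoSubRel G)

/-! ## Auxiliary list lemmas -/

namespace CPGAux

open List

lemma pair_infix (l : List (ℤ×ℤ)) (i : ℕ) (h : i + 1 < l.length) :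
    [l[i], l[i+1]] <:+: l := by
  refine ⟨l.take i, l.drop (i+2), ?_⟩
  have h1 : l.drop i = l[i] :: l.drop (i+1) := List.drop_eq_getElem_cons (by omega)
  have h2 : l.drop (i+1) = l[i+1] :: l.drop (i+2) := List.drop_eq_getElem_cons (by omega)
  rw [show l.take i ++ [l[i], l[i+1]] ++ l.drop (i+2)
      = l.take i ++ l.drop i by rw [h1, h2]; simp]
  exact l.take_append_drop i

lemma triple_infix (l : List (ℤ×ℤ)) (i : ℕ) (h : i + 2 < l.length) :
    [l[i], l[i+1], l[i+2]] <:+: l := by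
  refine ⟨l.take i, l.drop (i+3), ?_⟩
  have h1 : l.drop i = l[i] :: l.drop (i+1) := List.drop_eq_getElem_cons (by omega)
  have h2 : l.drop (i+1) = l[i+1] :: l.drop (i+2) := List.drop_eq_getElem_cons (by omega)
  have h3 : l.drop (i+2) = l[i+2] :: l.drop (i+3) := List.drop_eq_getElem_cons (by omega)
  rw [show l.take i ++ [l[i], l[i+1], l[i+2]] ++ l.drop (i+3)
      = l.take i ++ l.drop i by rw [h1, h2, h3]; simp]
  exact l.take_append_drop i

lemma chain'_getElem {l : List (ℤ×ℤ)} (hc : l.Chain' GridStep) (i : ℕ)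
    (h : i + 1 < l.length) : GridStep l[i] l[i+1] := by
  change List.IsChain GridStep l at hc
  rw [List.isChain_iff_getElem] at hc
  exact hc i (by omega)

lemma consecIn_comm (l : List (ℤ×ℤ)) (p q : ℤ×ℤ) : ConsecIn l p q ↔ ConsecIn l q p :=
  Or.comm

lemma consecIn_of_getElem (l : List (ℤ×ℤ)) (i : ℕ) (h : i + 1 < l.length) :
    ConsecIn l l[i] l[i+1] := Or.inl (pair_infix l i h)

lemma gridStep_ne {p q : ℤ×ℤ} (h : GridStep p q) : p ≠ q := by
  intro he; subst he; simp [GridStep] at h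

/-! ## Boxes: degenerate rectangles describing 0-bend paths -/

structure Box where
  x1 : ℤ
  x2 : ℤ
  y1 : ℤ
  y2 : ℤ
  hx : x1 ≤ x2
  hy : y1 ≤ y2
  hdeg : x1 = x2 ∨ y1 = y2
  hne : x1 < x2 ∨ y1 < y2

namespace Box

def mem (B : Box) (z : ℤ×ℤ) : Prop :=
  B.x1 ≤ z.1 ∧ z.1 ≤ B.x2 ∧ B.y1 ≤ z.2 ∧ z.2 ≤ B.y2

def IsEnd (B : Box) (z : ℤ×ℤ) : Prop :=
  z = (B.x1, B.y1) ∨ z = (B.x2, B.y2)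

lemma mem_of_isEnd {B : Box} {z : ℤ×ℤ} (h : B.IsEnd z) : B.mem z := by
  rcases h with h | h <;> subst h <;>
    exact ⟨by simp [B.hx, B.hy], by simp [B.hx, B.hy], by simp [B.hx, B.hy], by simp [B.hx, B.hy]⟩

/-- The list of grid points of the box (degenerate rectangle = segment). -/
def pts (B : Box) : List (ℤ×ℤ) :=
  if B.y1 = B.y2 then (List.range ((B.x2 - B.x1).toNat + 1)).map (fun i : ℕ => ((B.x1 + i : ℤ), B.y1))
  else (List.range ((B.y2 - B.y1).toNat + 1)).map (fun i : ℕ => (B.x1, (B.y1 + i : ℤ)))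

lemma length_pts (B : Box) : 2 ≤ B.pts.length := by
  unfold pts
  rcases B.hdeg with h | h <;> rcases B.hne with h' | h' <;> split <;>
    simp only [List.length_map, List.length_range] <;> omega

lemma getElem_pts (B : Box) (i : ℕ) (h : i < B.pts.length) :
    B.pts[i] = if B.y1 = B.y2 then (B.x1 + i, B.y1) else (B.x1, B.y1 + i) := by
  unfold pts at h ⊢
  split <;> simp

lemma length_pts_eq (B : Box) :
    B.pts.length = if B.y1 = B.y2 then (B.x2 - B.x1).toNat + 1 else (B.y2 - B.y1).toNat + 1 := by
  unfold pts; split <;> simp only [List.length_map, List.length_range]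

lemma chain'_pts (B : Box) : B.pts.Chain' GridStep := by
  show List.IsChain GridStep B.pts
  rw [List.isChain_iff_getElem]
  intro i h
  have h1 : i < B.pts.length := by omega
  have h2 : i + 1 < B.pts.length := by omega
  have e1 : B.pts.get ⟨i, h1⟩ = B.pts[i] := rfl
  have e2 : B.pts.get ⟨i+1, h2⟩ = B.pts[i+1] := rfl
  rw [getElem_pts B i h1, getElem_pts B (i+1) h2]
  split <;> simp [GridStep] <;> omega

lemma nodup_pts (B : Box) : B.pts.Nodup := by
  unfold pts
  split <;>
  · refine (List.nodup_range).map ?_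
    intro a b hab
    simp [Prod.ext_iff] at hab
    omega

def toPath (B : Box) : GridPath :=
  { pts := B.pts
    two_le_length := B.length_pts
    step := B.chain'_pts
    nodup := B.nodup_pts }

lemma mem_toSet (B : Box) (z : ℤ×ℤ) : z ∈ B.toPath.toSet ↔ B.mem z := by
  have hdeg := B.hdeg
  have hx := B.hx
  have hy := B.hy
  show z ∈ B.pts ↔ _
  rw [List.mem_iff_getElem]
  constructor
  · rintro ⟨i, hi, he⟩
    rw [getElem_pts B i hi] at he
    have hl := B.length_pts_eq
    constructor
    · by_cases h : B.y1 = B.y2 <;> simp [h] at he hl <;> rw [← he] <;> simp <;> omega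
    constructor
    · by_cases h : B.y1 = B.y2 <;> simp [h] at he hl <;> rw [← he] <;> simp <;> omega
    constructor
    · by_cases h : B.y1 = B.y2 <;> simp [h] at he hl <;> rw [← he] <;> simp <;> omega
    · by_cases h : B.y1 = B.y2 <;> simp [h] at he hl <;> rw [← he] <;> simp <;> omega
  · rintro ⟨m1, m2, m3, m4⟩
    have hl := B.length_pts_eq
    by_cases h : B.y1 = B.y2
    · refine ⟨(z.1 - B.x1).toNat, by simp [h] at hl ⊢; omega, ?_⟩
      rw [getElem_pts B _ (by simp [h] at hl ⊢; omega)]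
      simp [h, Prod.ext_iff]
      omega
    · have hxx : B.x1 = B.x2 := by rcases hdeg with h' | h'; exact h'; exact absurd h' h
      refine ⟨(z.2 - B.y1).toNat, by simp [h] at hl ⊢; omega, ?_⟩
      rw [getElem_pts B _ (by simp [h] at hl ⊢; omega)]
      simp [h, Prod.ext_iff]
      omega

lemma isEndpoint_iff (B : Box) (z : ℤ×ℤ) : B.toPath.IsEndpoint z ↔ B.IsEnd z := by
  have hl := B.length_pts_eq
  have h0 : 0 < B.pts.length := by have := B.length_pts; omega
  have hlast : B.pts.length - 1 < B.pts.length := by omega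
  have hfirst : B.toPath.first = B.pts[0] := B.pts.head_eq_getElem _
  have hlaste : B.toPath.last = B.pts[B.pts.length - 1] := B.pts.getLast_eq_getElem _
  unfold GridPath.IsEndpoint
  rw [hfirst, hlaste, getElem_pts B 0 h0, getElem_pts B _ hlast]
  unfold IsEnd
  have hdeg := B.hdeg
  have hx := B.hx
  have hy := B.hy
  by_cases h : B.y1 = B.y2 <;> simp only [h, if_true, if_false, if_pos, if_neg, not_false_iff] <;>
      simp only [h] at hl <;> rw [hl] <;> simp [Prod.ext_iff]
  · constructor
    · rintro (⟨he1, he2⟩ | ⟨he1, he2⟩) <;> [left; right] <;> omega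
    · rintro (⟨he1, he2⟩ | ⟨he1, he2⟩) <;> [left; right] <;> omega
  · have hxx : B.x1 = B.x2 := by rcases hdeg with h' | h'; exact h'; exact absurd h' h
    constructor
    · rintro (⟨he1, he2⟩ | ⟨he1, he2⟩) <;> [left; right] <;> omega
    · rintro (⟨he1, he2⟩ | ⟨he1, he2⟩) <;> [left; right] <;> omega

lemma bendsAtMost_zero (B : Box) : B.toPath.BendsAtMost 0 := by
  have : B.toPath.bendSet = ∅ := by
    ext p
    simp only [GridPath.bendSet, Set.mem_setOf_eq, Set.mem_empty_iff_false, iff_false]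
    rintro ⟨a, c, hinf, h1, h2⟩
    have ha : a ∈ B.pts := hinf.sublist.mem (by simp)
    have hc : c ∈ B.pts := hinf.sublist.mem (by simp)
    have hma := (B.mem_toSet a).mp ha
    have hmc := (B.mem_toSet c).mp hc
    rcases B.hdeg with h | h
    · exact h1 (by unfold mem at hma hmc; omega)
    · exact h2 (by unfold mem at hma hmc; omega)
  unfold GridPath.BendsAtMost
  rw [this]
  simp

lemma consecIn_iff (B : Box) (p q : ℤ×ℤ) :
    ConsecIn B.toPath.pts p q ↔ B.mem p ∧ B.mem q ∧ GridStep p q := by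
  constructor
  · intro h
    have hs : ∀ a b : ℤ×ℤ, [a,b] <:+: B.pts → B.mem a ∧ B.mem b ∧ GridStep a b := by
      intro a b hinf
      refine ⟨(B.mem_toSet a).mp (hinf.sublist.mem (by simp)),
        (B.mem_toSet b).mp (hinf.sublist.mem (by simp)), ?_⟩
      have := (B.chain'_pts).infix hinf
      simpa using List.isChain_pair.mp this
    rcases h with h | h
    · exact hs p q h
    · obtain ⟨m1, m2, m3⟩ := hs q p h
      exact ⟨m2, m1, by unfold GridStep at m3 ⊢; omega⟩
  · rintro ⟨hp, hq, hst⟩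
    have hl := B.length_pts_eq
    unfold mem at hp hq
    unfold GridStep at hst
    by_cases h : B.y1 = B.y2
    · -- horizontal
      have hpy : p.2 = B.y1 := by omega
      have hqy : q.2 = B.y1 := by omega
      have : q.1 = p.1 + 1 ∨ p.1 = q.1 + 1 := by omega
      simp [h] at hl
      rcases this with hh | hh
      · have hi : (p.1 - B.x1).toNat + 1 < B.pts.length := by omega
        have e1 : B.pts[(p.1 - B.x1).toNat] = p := by
          rw [getElem_pts B _ (by omega)]; simp [h, Prod.ext_iff]; omega
        have e2 : B.pts[(p.1 - B.x1).toNat + 1] = q := by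
          rw [getElem_pts B _ hi]; simp [h, Prod.ext_iff]; omega
        have := consecIn_of_getElem B.pts _ hi
        rwa [e1, e2] at this
      · have hi : (q.1 - B.x1).toNat + 1 < B.pts.length := by omega
        have e1 : B.pts[(q.1 - B.x1).toNat] = q := by
          rw [getElem_pts B _ (by omega)]; simp [h, Prod.ext_iff]; omega
        have e2 : B.pts[(q.1 - B.x1).toNat + 1] = p := by
          rw [getElem_pts B _ hi]; simp [h, Prod.ext_iff]; omega
        have := consecIn_of_getElem B.pts _ hi
        rw [e1, e2] at this
        exact (consecIn_comm _ _ _).mp this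
    · have hxx : B.x1 = B.x2 := by rcases B.hdeg with h' | h'; exact h'; exact absurd h' h
      have hpy : p.1 = B.x1 := by omega
      have hqy : q.1 = B.x1 := by omega
      have : q.2 = p.2 + 1 ∨ p.2 = q.2 + 1 := by omega
      simp [h] at hl
      rcases this with hh | hh
      · have hi : (p.2 - B.y1).toNat + 1 < B.pts.length := by omega
        have e1 : B.pts[(p.2 - B.y1).toNat] = p := by
          rw [getElem_pts B _ (by omega)]; simp [h, Prod.ext_iff]; omega
        have e2 : B.pts[(p.2 - B.y1).toNat + 1] = q := by
          rw [getElem_pts B _ hi]; simp [h, Prod.ext_iff]; omega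
        have := consecIn_of_getElem B.pts _ hi
        rwa [e1, e2] at this
      · have hi : (q.2 - B.y1).toNat + 1 < B.pts.length := by omega
        have e1 : B.pts[(q.2 - B.y1).toNat] = q := by
          rw [getElem_pts B _ (by omega)]; simp [h, Prod.ext_iff]; omega
        have e2 : B.pts[(q.2 - B.y1).toNat + 1] = p := by
          rw [getElem_pts B _ hi]; simp [h, Prod.ext_iff]; omega
        have := consecIn_of_getElem B.pts _ hi
        rw [e1, e2] at this
        exact (consecIn_comm _ _ _).mp this

end Box

end CPGAux

namespace CPGAux

lemma pair_infix' (l : List (ℤ×ℤ)) (i j : ℕ) (hij : j = i + 1) (h : j < l.length) :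
    [l[i]'(by omega), l[j]'h] <:+: l := by
  subst hij; exact pair_infix l i h

lemma triple_infix' (l : List (ℤ×ℤ)) (i j k : ℕ) (hij : j = i + 1) (hjk : k = j + 1)
    (h : k < l.length) : [l[i]'(by omega), l[j]'(by omega), l[k]'h] <:+: l := by
  subst hij; subst hjk; exact triple_infix l i h

lemma chain'_getElem' {l : List (ℤ×ℤ)} (hc : l.Chain' GridStep) (i j : ℕ) (hij : j = i + 1)
    (h : j < l.length) : GridStep (l[i]'(by omega)) (l[j]'h) := by
  subst hij; exact chain'_getElem hc i h

/-! ## Every 0-bend grid path is described by a box -/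

lemma step_arith {a p c : ℤ×ℤ} (h1 : GridStep a p) (h2 : GridStep p c)
    (hne : a ≠ c) (hcol : a.1 = c.1 ∨ a.2 = c.2) :
    c.1 - p.1 = p.1 - a.1 ∧ c.2 - p.2 = p.2 - a.2 := by
  unfold GridStep at h1 h2
  have hne' : ¬ (a.1 = c.1 ∧ a.2 = c.2) := by
    intro ⟨e1, e2⟩; exact hne (Prod.ext e1 e2)
  omega

set_option maxHeartbeats 2000000 in
lemma exists_box (P : GridPath) (h0 : P.BendsAtMost 0) :
    ∃ B : Box, (∀ z, z ∈ P.toSet ↔ B.mem z) ∧ (∀ z, P.IsEndpoint z ↔ B.IsEnd z) ∧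
      (∀ p q, B.mem p → B.mem q → GridStep p q → ConsecIn P.pts p q) := by
  -- no bends
  have hbend : P.bendSet = ∅ := by
    have hfin : P.bendSet.Finite := by
      apply P.pts.finite_toSet.subset
      rintro p ⟨a, c, hinf, -, -⟩
      exact hinf.sublist.mem (by simp)
    have := h0
    unfold GridPath.BendsAtMost at this
    rw [Nat.le_zero] at this
    exact (Set.ncard_eq_zero hfin).mp this
  have hnb : ∀ a p c : ℤ×ℤ, [a, p, c] <:+: P.pts → a.1 = c.1 ∨ a.2 = c.2 := by
    intro a p c hinf
    by_contra hcon
    push_neg at hcon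
    have : p ∈ P.bendSet := ⟨a, c, hinf, hcon.1, hcon.2⟩
    rw [hbend] at this
    exact this
  set l := P.pts with hl
  have hlen : 2 ≤ l.length := P.two_le_length
  have hchain : l.Chain' GridStep := P.step
  have hnd : l.Nodup := P.nodup
  -- indexed form
  obtain ⟨x0, y0, dx, dy, hstep, hidx⟩ : ∃ x0 y0 dx dy : ℤ,
      (dx.natAbs + dy.natAbs = 1) ∧ ∀ i : ℕ, ∀ h : i < l.length,
      (l[i]'h).1 = x0 + i * dx ∧ (l[i]'h).2 = y0 + i * dy := by
    have h1 : 1 < l.length := by omega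
    have h0' : 0 < l.length := by omega
    refine ⟨(l[0]'h0').1, (l[0]'h0').2,
      (l[1]'h1).1 - (l[0]'h0').1, (l[1]'h1).2 - (l[0]'h0').2, ?_, ?_⟩
    · have := chain'_getElem' hchain 0 1 rfl h1
      unfold GridStep at this
      omega
    intro i
    induction i using Nat.strong_induction_on with
    | _ i IH =>
      rcases Nat.lt_or_ge i 2 with hi2 | hi2
      · interval_cases i
        · intro h; simp
        · intro h; constructor <;> push_cast <;> ring_nf <;> omega
      · obtain ⟨m, rfl⟩ : ∃ m, i = m + 2 := ⟨i - 2, by omega⟩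
        intro h
        have hm1 : m + 1 < l.length := by omega
        have hm0 : m < l.length := by omega
        have gs1 : GridStep (l[m]'hm0) (l[m+1]'hm1) := chain'_getElem' hchain m (m+1) rfl hm1
        have gs2 : GridStep (l[m+1]'hm1) (l[m+2]'h) := chain'_getElem' hchain (m+1) (m+2) rfl h
        have hcol : (l[m]'hm0).1 = (l[m+2]'h).1 ∨ (l[m]'hm0).2 = (l[m+2]'h).2 :=
          hnb _ _ _ (triple_infix' l m (m+1) (m+2) rfl rfl h)
        have hne : l[m]'hm0 ≠ l[m+2]'h := by
          intro he
          have := (List.Nodup.getElem_inj_iff hnd).mp he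
          omega
        obtain ⟨t1, t2⟩ := step_arith gs1 gs2 hne hcol
        obtain ⟨u1, u2⟩ := IH m (by omega) hm0
        obtain ⟨v1, v2⟩ := IH (m+1) (by omega) hm1
        constructor <;> push_cast at u1 u2 v1 v2 ⊢ <;> nlinarith [t1, t2, u1, u2, v1, v2]
  set k : ℕ := l.length - 1 with hk
  have hk1 : 1 ≤ k := by omega
  have hkl : k < l.length := by omega
  have hmem : ∀ z : ℤ×ℤ, z ∈ P.toSet ↔
      ∃ i : ℕ, i ≤ k ∧ z.1 = x0 + i * dx ∧ z.2 = y0 + i * dy := by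
    intro z
    show z ∈ l ↔ _
    rw [List.mem_iff_getElem]
    constructor
    · rintro ⟨i, hi, he⟩
      obtain ⟨i1, i2⟩ := hidx i hi
      exact ⟨i, by omega, by rw [← he]; exact i1, by rw [← he]; exact i2⟩
    · rintro ⟨i, hi, e1, e2⟩
      refine ⟨i, by omega, ?_⟩
      obtain ⟨i1, i2⟩ := hidx i (by omega)
      exact Prod.ext (by omega) (by omega)
  have hends : ∀ z : ℤ×ℤ, P.IsEndpoint z ↔
      ((z.1 = x0 ∧ z.2 = y0) ∨ (z.1 = x0 + k * dx ∧ z.2 = y0 + k * dy)) := by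
    intro z
    unfold GridPath.IsEndpoint
    have h0' : 0 < l.length := by omega
    have hfirst : P.first = l[0]'h0' := l.head_eq_getElem _
    have hlast : P.last = l[k]'hkl := by
      have := l.getLast_eq_getElem (P.ne_nil)
      rw [GridPath.last, this]
    rw [hfirst, hlast]
    obtain ⟨a1, a2⟩ := hidx 0 h0'
    obtain ⟨b1, b2⟩ := hidx k hkl
    simp only [Nat.cast_zero, zero_mul, add_zero] at a1 a2
    constructor
    · rintro (he | he) <;> subst he
      · left; exact ⟨a1, a2⟩
      · right; exact ⟨b1, b2⟩
    · rintro (⟨e1, e2⟩ | ⟨e1, e2⟩)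
      · left; exact Prod.ext (by omega) (by omega)
      · right; exact Prod.ext (by omega) (by omega)
  have hcons : ∀ p q : ℤ×ℤ,
      (∃ i : ℕ, i ≤ k ∧ p.1 = x0 + i * dx ∧ p.2 = y0 + i * dy) →
      (∃ i : ℕ, i ≤ k ∧ q.1 = x0 + i * dx ∧ q.2 = y0 + i * dy) →
      GridStep p q → ConsecIn l p q := by
    rintro p q ⟨i, hi, p1, p2⟩ ⟨j, hj, q1, q2⟩ hst
    unfold GridStep at hst
    have hij : j = i + 1 ∨ i = j + 1 := by
      have hd4 : (dx = 1 ∧ dy = 0) ∨ (dx = -1 ∧ dy = 0) ∨ (dx = 0 ∧ dy = 1) ∨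
          (dx = 0 ∧ dy = -1) := by omega
      have hicast : ((i:ℤ) - (j:ℤ)).natAbs = 1 → (j = i + 1 ∨ i = j + 1) := by omega
      apply hicast
      rcases hd4 with ⟨e1, e2⟩ | ⟨e1, e2⟩ | ⟨e1, e2⟩ | ⟨e1, e2⟩ <;> subst e1 <;> subst e2 <;>
        simp only [mul_one, mul_zero, mul_neg] at p1 p2 q1 q2 <;> omega
    rcases hij with rfl | rfl
    · have hinf := pair_infix' l i (i+1) rfl (by omega)
      obtain ⟨a1, a2⟩ := hidx i (by omega)
      obtain ⟨b1, b2⟩ := hidx (i+1) (by omega)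
      have ep : l[i]'(by omega) = p := Prod.ext (a1.trans p1.symm) (a2.trans p2.symm)
      have eq' : l[i+1]'(by omega) = q := Prod.ext (b1.trans q1.symm) (b2.trans q2.symm)
      left
      rw [← ep, ← eq']
      exact hinf
    · have hinf := pair_infix' l j (j+1) rfl (by omega)
      obtain ⟨a1, a2⟩ := hidx j (by omega)
      obtain ⟨b1, b2⟩ := hidx (j+1) (by omega)
      have ep : l[j]'(by omega) = q := Prod.ext (a1.trans q1.symm) (a2.trans q2.symm)
      have eq' : l[j+1]'(by omega) = p := Prod.ext (b1.trans p1.symm) (b2.trans p2.symm)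
      right
      rw [← ep, ← eq']
      exact hinf
  clear hidx hchain hnd hbend hnb
  have hd4 : (dx = 1 ∧ dy = 0) ∨ (dx = -1 ∧ dy = 0) ∨ (dx = 0 ∧ dy = 1) ∨ (dx = 0 ∧ dy = -1) := by
    omega
  have hkk : (1:ℤ) ≤ (k:ℤ) := by exact_mod_cast hk1
  rcases hd4 with ⟨e1, e2⟩ | ⟨e1, e2⟩ | ⟨e1, e2⟩ | ⟨e1, e2⟩ <;> subst e1 <;> subst e2
  · refine ⟨⟨x0, x0 + k, y0, y0, by omega, le_refl _, Or.inr rfl, by omega⟩, ?_, ?_, ?_⟩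
    · intro z
      rw [hmem z]
      unfold Box.mem
      dsimp only
      constructor
      · rintro ⟨i, hi, f1, f2⟩
        have : (i:ℤ) ≤ (k:ℤ) := by exact_mod_cast hi
        refine ⟨by omega, by omega, by omega, by omega⟩
      · rintro ⟨f1, f2, f3, f4⟩
        refine ⟨(z.1 - x0).toNat, by omega, by push_cast; omega, by omega⟩
    · intro z
      rw [hends z]
      unfold Box.IsEnd
      dsimp only
      simp only [Prod.mk.injEq, Prod.ext_iff]
      constructor
      · rintro (⟨f1, f2⟩ | ⟨f1, f2⟩)
        · left; exact ⟨by omega, by omega⟩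
        · right; exact ⟨by omega, by omega⟩
      · rintro (⟨f1, f2⟩ | ⟨f1, f2⟩)
        · left; exact ⟨by omega, by omega⟩
        · right; exact ⟨by omega, by omega⟩
    · intro p q hp hq hst
      unfold Box.mem at hp hq
      dsimp only at hp hq
      apply hcons p q ⟨(p.1 - x0).toNat, by omega, by push_cast; omega, by omega⟩
        ⟨(q.1 - x0).toNat, by omega, by push_cast; omega, by omega⟩ hst
  · refine ⟨⟨x0 - k, x0, y0, y0, by omega, le_refl _, Or.inr rfl, by omega⟩, ?_, ?_, ?_⟩
    · intro z
      rw [hmem z]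
      unfold Box.mem
      dsimp only
      constructor
      · rintro ⟨i, hi, f1, f2⟩
        have : (i:ℤ) ≤ (k:ℤ) := by exact_mod_cast hi
        refine ⟨by omega, by omega, by omega, by omega⟩
      · rintro ⟨f1, f2, f3, f4⟩
        refine ⟨(x0 - z.1).toNat, by omega, by push_cast; omega, by omega⟩
    · intro z
      rw [hends z]
      unfold Box.IsEnd
      dsimp only
      simp only [Prod.mk.injEq, Prod.ext_iff]
      constructor
      · rintro (⟨f1, f2⟩ | ⟨f1, f2⟩)
        · right; exact ⟨by omega, by omega⟩
        · left; exact ⟨by omega, by omega⟩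
      · rintro (⟨f1, f2⟩ | ⟨f1, f2⟩)
        · right; exact ⟨by omega, by omega⟩
        · left; exact ⟨by omega, by omega⟩
    · intro p q hp hq hst
      unfold Box.mem at hp hq
      dsimp only at hp hq
      apply hcons p q ⟨(x0 - p.1).toNat, by omega, by push_cast; omega, by omega⟩
        ⟨(x0 - q.1).toNat, by omega, by push_cast; omega, by omega⟩ hst
  · refine ⟨⟨x0, x0, y0, y0 + k, le_refl _, by omega, Or.inl rfl, by omega⟩, ?_, ?_, ?_⟩
    · intro z
      rw [hmem z]
      unfold Box.mem
      dsimp only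
      constructor
      · rintro ⟨i, hi, f1, f2⟩
        have : (i:ℤ) ≤ (k:ℤ) := by exact_mod_cast hi
        refine ⟨by omega, by omega, by omega, by omega⟩
      · rintro ⟨f1, f2, f3, f4⟩
        refine ⟨(z.2 - y0).toNat, by omega, by omega, by push_cast; omega⟩
    · intro z
      rw [hends z]
      unfold Box.IsEnd
      dsimp only
      simp only [Prod.mk.injEq, Prod.ext_iff]
      constructor
      · rintro (⟨f1, f2⟩ | ⟨f1, f2⟩)
        · left; exact ⟨by omega, by omega⟩
        · right; exact ⟨by omega, by omega⟩
      · rintro (⟨f1, f2⟩ | ⟨f1, f2⟩)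
        · left; exact ⟨by omega, by omega⟩
        · right; exact ⟨by omega, by omega⟩
    · intro p q hp hq hst
      unfold Box.mem at hp hq
      dsimp only at hp hq
      apply hcons p q ⟨(p.2 - y0).toNat, by omega, by omega, by push_cast; omega⟩
        ⟨(q.2 - y0).toNat, by omega, by omega, by push_cast; omega⟩ hst
  · refine ⟨⟨x0, x0, y0 - k, y0, le_refl _, by omega, Or.inl rfl, by omega⟩, ?_, ?_, ?_⟩
    · intro z
      rw [hmem z]
      unfold Box.mem
      dsimp only
      constructor
      · rintro ⟨i, hi, f1, f2⟩
        have : (i:ℤ) ≤ (k:ℤ) := by exact_mod_cast hi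
        refine ⟨by omega, by omega, by omega, by omega⟩
      · rintro ⟨f1, f2, f3, f4⟩
        refine ⟨(y0 - z.2).toNat, by omega, by omega, by push_cast; omega⟩
    · intro z
      rw [hends z]
      unfold Box.IsEnd
      dsimp only
      simp only [Prod.mk.injEq, Prod.ext_iff]
      constructor
      · rintro (⟨f1, f2⟩ | ⟨f1, f2⟩)
        · right; exact ⟨by omega, by omega⟩
        · left; exact ⟨by omega, by omega⟩
      · rintro (⟨f1, f2⟩ | ⟨f1, f2⟩)
        · right; exact ⟨by omega, by omega⟩
        · left; exact ⟨by omega, by omega⟩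
    · intro p q hp hq hst
      unfold Box.mem at hp hq
      dsimp only at hp hq
      apply hcons p q ⟨(y0 - p.2).toNat, by omega, by omega, by push_cast; omega⟩
        ⟨(y0 - q.2).toNat, by omega, by omega, by push_cast; omega⟩ hst

end CPGAux

namespace CPGAux

open Classical

/-! ## Construction data -/

/-- scaling a point by 5 -/
def sc (p : ℤ×ℤ) : ℤ×ℤ := (5 * p.1, 5 * p.2)

namespace Box

def lo (b : Box) : ℤ×ℤ := (b.x1, b.y1)
def hi (b : Box) : ℤ×ℤ := (b.x2, b.y2)

lemma isEnd_iff_lo_hi (b : Box) (z : ℤ×ℤ) : b.IsEnd z ↔ z = b.lo ∨ z = b.hi := Iff.rfl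

/-- unit direction along a box -/
def dirv (b : Box) : ℤ×ℤ := if b.y1 = b.y2 then (1,0) else (0,1)

/-- inward direction at an end `p` of `b` -/
def inw (b : Box) (p : ℤ×ℤ) : ℤ×ℤ := if p = b.lo then b.dirv else -b.dirv

lemma dirv_unit (b : Box) : b.dirv = (1,0) ∨ b.dirv = (0,1) := by
  unfold dirv; split <;> simp

lemma inw_unit (b : Box) (p : ℤ×ℤ) :
    b.inw p = (1,0) ∨ b.inw p = (-1,0) ∨ b.inw p = (0,1) ∨ b.inw p = (0,-1) := by
  unfold inw
  rcases b.dirv_unit with h | h <;> rw [h] <;> split <;> simp [Prod.ext_iff]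

/-- the scaled box -/
def sc5 (b : Box) : Box :=
  ⟨5*b.x1, 5*b.x2, 5*b.y1, 5*b.y2, by have := b.hx; omega, by have := b.hy; omega,
   by rcases b.hdeg with h | h; exact Or.inl (by omega); exact Or.inr (by omega),
   by rcases b.hne with h | h; exact Or.inl (by omega); exact Or.inr (by omega)⟩

lemma sc5_mem (b : Box) (z : ℤ×ℤ) :
    b.sc5.mem z ↔ 5*b.x1 ≤ z.1 ∧ z.1 ≤ 5*b.x2 ∧ 5*b.y1 ≤ z.2 ∧ z.2 ≤ 5*b.y2 := Iff.rfl

/-- a unit box (one grid segment) from `q` to `q + d` -/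
def ub (q d : ℤ×ℤ) : Box :=
  if h : d.2 = 0 ∧ d.1 ≠ 0 then
    ⟨min q.1 (q.1+d.1), max q.1 (q.1+d.1), q.2, q.2, by omega, le_rfl, Or.inr rfl, by
      rcases h with ⟨h1, h2⟩; omega⟩
  else if h2 : d.1 = 0 ∧ d.2 ≠ 0 then
    ⟨q.1, q.1, min q.2 (q.2+d.2), max q.2 (q.2+d.2), le_rfl, by omega, Or.inl rfl, by
      rcases h2 with ⟨h1, h2⟩; omega⟩
  else ⟨q.1, q.1, q.2, q.2+1, le_rfl, by omega, Or.inl rfl, by omega⟩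

lemma ub_mem (q d : ℤ×ℤ)
    (hd : d = (1,0) ∨ d = (-1,0) ∨ d = (0,1) ∨ d = (0,-1)) (z : ℤ×ℤ) :
    (ub q d).mem z ↔ z = q ∨ z = q + d := by
  rcases hd with h | h | h | h <;> subst h <;>
    simp [ub, mem, Prod.ext_iff] <;> omega

lemma ub_isEnd (q d : ℤ×ℤ)
    (hd : d = (1,0) ∨ d = (-1,0) ∨ d = (0,1) ∨ d = (0,-1)) (z : ℤ×ℤ) :
    (ub q d).IsEnd z ↔ z = q ∨ z = q + d := by
  rcases hd with h | h | h | h <;> subst h <;>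
    simp [ub, IsEnd, lo, hi, Prod.ext_iff] <;> omega

end Box

section Constr

variable {V : Type} (G : SimpleGraph V) (B : V → Box) (idx : V → ℕ)

/-- the contact point of two boxes (when the vertices are adjacent) -/
noncomputable def cp (u v : V) : ℤ×ℤ :=
  if h : ∃ z, (B u).mem z ∧ (B v).mem z then h.choose else (0,0)

def endAt (u v : V) : Prop := (B u).IsEnd (cp B u v)

/-- `u` is the vertex retracted at the contact with `v` -/
def ret (u v : V) : Prop := endAt B u v ∧ (¬ endAt B v u ∨ idx u < idx v)

/-- retraction amount at the lower end of the scaled box of `u` -/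
noncomputable def rlo (u : V) : ℤ :=
  if ∃ v, G.Adj u v ∧ ret B idx u v ∧ cp B u v = (B u).lo then 2 else 0

noncomputable def rhi (u : V) : ℤ :=
  if ∃ v, G.Adj u v ∧ ret B idx u v ∧ cp B u v = (B u).hi then 2 else 0

lemma rlo_bounds (u : V) : rlo G B idx u = 0 ∨ rlo G B idx u = 2 := by
  unfold rlo; split <;> simp

lemma rhi_bounds (u : V) : rhi G B idx u = 0 ∨ rhi G B idx u = 2 := by
  unfold rhi; split <;> simp

/-- the scaled and retracted vertex box -/
noncomputable def newV (u : V) : Box :=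
  if h : (B u).y1 = (B u).y2 then
    ⟨5*(B u).x1 + rlo G B idx u, 5*(B u).x2 - rhi G B idx u, 5*(B u).y1, 5*(B u).y2,
     by rcases rlo_bounds G B idx u with h1 | h1 <;> rcases rhi_bounds G B idx u with h2 | h2 <;>
        rcases (B u).hne with h3 | h3 <;> rcases (B u).hdeg with h4 | h4 <;> omega,
     by rcases rlo_bounds G B idx u with h1 | h1 <;> rcases rhi_bounds G B idx u with h2 | h2 <;>
        rcases (B u).hne with h3 | h3 <;> rcases (B u).hdeg with h4 | h4 <;> omega,
     Or.inr (by omega),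
     Or.inl (by rcases rlo_bounds G B idx u with h1 | h1 <;> rcases rhi_bounds G B idx u with h2 | h2 <;>
        rcases (B u).hne with h3 | h3 <;> rcases (B u).hdeg with h4 | h4 <;> omega)⟩
  else
    ⟨5*(B u).x1, 5*(B u).x2, 5*(B u).y1 + rlo G B idx u, 5*(B u).y2 - rhi G B idx u,
     by rcases rlo_bounds G B idx u with h1 | h1 <;> rcases rhi_bounds G B idx u with h2 | h2 <;>
        rcases (B u).hne with h3 | h3 <;> rcases (B u).hdeg with h4 | h4 <;> omega,
     by rcases rlo_bounds G B idx u with h1 | h1 <;> rcases rhi_bounds G B idx u with h2 | h2 <;>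
        rcases (B u).hne with h3 | h3 <;> rcases (B u).hdeg with h4 | h4 <;> omega,
     Or.inl (by rcases (B u).hdeg with h4 | h4 <;> omega),
     Or.inr (by rcases rlo_bounds G B idx u with h1 | h1 <;> rcases rhi_bounds G B idx u with h2 | h2 <;>
        rcases (B u).hne with h3 | h3 <;> rcases (B u).hdeg with h4 | h4 <;> omega)⟩

/-- the box of an edge-vertex `(a,b)` (touching the structure of `a`) -/
noncomputable def edgeB (a b : V) : Box :=
  if ret B idx a b then
    Box.ub (sc (cp B a b) + (B a).inw (cp B a b)) ((B a).inw (cp B a b))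
  else
    Box.ub (sc (cp B b a)) ((B b).inw (cp B b a))

/-- the full family of boxes for the 2-subdivision -/
noncomputable def FN : SubdivV G → Box
  | Sum.inl u => newV G B idx u
  | Sum.inr e => edgeB B idx e.1.1 e.1.2

/-- All the facts we need about a 0-bend CPG representation of `G`. -/
structure Good : Prop where
  uniq : ∀ u v : V, u ≠ v → ∀ z z' : ℤ×ℤ, (B u).mem z → (B v).mem z →
    (B u).mem z' → (B v).mem z' → z = z'
  adj_ex : ∀ u v, G.Adj u v → ∃ z, (B u).mem z ∧ (B v).mem z
  adj_of : ∀ u v, u ≠ v → (∃ z, (B u).mem z ∧ (B v).mem z) → G.Adj u v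
  ends : ∀ u v, u ≠ v → ∀ z, (B u).mem z → (B v).mem z → (B u).IsEnd z ∨ (B v).IsEnd z
  tri : ∀ u v w : V, ∀ z : ℤ×ℤ, u ≠ v → u ≠ w → v ≠ w → (B u).mem z → (B v).mem z →
    (B w).mem z → False
  inj : Function.Injective idx

end Constr

end CPGAux

namespace CPGAux

namespace Box

lemma lo_ne_hi (b : Box) : b.lo ≠ b.hi := by
  have := b.hne
  simp [lo, hi, Prod.ext_iff]
  omega

lemma inw_lo (b : Box) : b.inw (b.x1, b.y1) = b.dirv := if_pos rfl

lemma inw_hi (b : Box) : b.inw (b.x2, b.y2) = -b.dirv := by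
  have h := b.lo_ne_hi
  unfold inw
  rw [if_neg]
  intro hc
  exact h hc.symm

lemma dirv_horiz (b : Box) (h : b.y1 = b.y2) : b.dirv = (1,0) := if_pos h

lemma dirv_vert (b : Box) (h : ¬ b.y1 = b.y2) : b.dirv = (0,1) := if_neg h

lemma vert_xeq (b : Box) (h : ¬ b.y1 = b.y2) : b.x1 = b.x2 := by
  rcases b.hdeg with h' | h'; exact h'; exact absurd h' h

/-- the three zone points at an end of a box lie in the scaled box -/
lemma zone_mem (b : Box) (p : ℤ×ℤ) (hp : b.IsEnd p) (k : ℤ) (h0 : 0 ≤ k) (h5 : k ≤ 5) :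
    b.sc5.mem (sc p + (k * (b.inw p).1, k * (b.inw p).2)) := by
  have hne := b.hne
  have hx := b.hx
  have hy := b.hy
  by_cases hor : b.y1 = b.y2
  · rcases hp with hp | hp <;> rw [hp]
    · rw [inw_lo, dirv_horiz b hor]
      simp [mem, sc5, sc, lo]
      omega
    · rw [inw_hi, dirv_horiz b hor]
      simp [mem, sc5, sc, hi]
      omega
  · have hxeq := b.vert_xeq hor
    rcases hp with hp | hp <;> rw [hp]
    · rw [inw_lo, dirv_vert b hor]
      simp [mem, sc5, sc, lo]
      omega
    · rw [inw_hi, dirv_vert b hor]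
      simp [mem, sc5, sc, hi]
      omega

/-- zone points with offset `k`, `1 ≤ k ≤ 4`, are not multiples of 5 -/
lemma zone_ne_sc {d : ℤ×ℤ} (hd : d = (1,0) ∨ d = (-1,0) ∨ d = (0,1) ∨ d = (0,-1))
    (q r : ℤ×ℤ) (k : ℤ) (h1 : 1 ≤ k) (h4 : k ≤ 4) :
    sc q + (k * d.1, k * d.2) ≠ sc r := by
  rcases hd with h | h | h | h <;> subst h <;> simp [sc, Prod.ext_iff] <;> omega

end Box

section Constr2

variable {V : Type} {G : SimpleGraph V} {B : V → Box} {idx : V → ℕ}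

variable (hG : Good G B idx)

include hG

lemma cp_mem {u v : V} (h : G.Adj u v) :
    (B u).mem (cp B u v) ∧ (B v).mem (cp B u v) := by
  unfold cp
  rw [dif_pos (hG.adj_ex u v h)]
  exact (hG.adj_ex u v h).choose_spec

lemma cp_spec {u v : V} (hne : u ≠ v) {z : ℤ×ℤ} (hu : (B u).mem z) (hv : (B v).mem z) :
    z = cp B u v := by
  have hex : ∃ z, (B u).mem z ∧ (B v).mem z := ⟨z, hu, hv⟩
  unfold cp
  rw [dif_pos hex]
  exact hG.uniq u v hne z hex.choose hu hv hex.choose_spec.1 hex.choose_spec.2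

lemma cp_comm {u v : V} (hne : u ≠ v) : cp B u v = cp B v u := by
  by_cases hex : ∃ z, (B u).mem z ∧ (B v).mem z
  · obtain ⟨z, h1, h2⟩ := hex
    rw [← cp_spec hG hne h1 h2, ← cp_spec hG hne.symm h2 h1]
  · have hex' : ¬ ∃ z, (B v).mem z ∧ (B u).mem z := by
      intro ⟨z, h1, h2⟩; exact hex ⟨z, h2, h1⟩
    unfold cp
    rw [dif_neg hex, dif_neg hex']

lemma ret_choice {u v : V} (h : G.Adj u v) :
    (ret B idx u v ∧ ¬ ret B idx v u) ∨ (ret B idx v u ∧ ¬ ret B idx u v) := by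
  have hne := h.ne
  have hend : endAt B u v ∨ endAt B v u := by
    have hcp := cp_mem hG h
    have := hG.ends u v hne (cp B u v) hcp.1 hcp.2
    rcases this with h' | h'
    · left; exact h'
    · right; unfold endAt; rw [← cp_comm hG hne]; exact h'
  have hidx : idx u ≠ idx v := fun he => hne (hG.inj he)
  unfold ret
  rcases hend with he | he
  · by_cases he' : endAt B v u
    · rcases lt_or_gt_of_ne hidx with hlt | hlt
      · left
        exact ⟨⟨he, Or.inr hlt⟩, by rintro ⟨-, hA | hA⟩; exact hA he; omega⟩
      · right
        exact ⟨⟨he', Or.inr hlt⟩, by rintro ⟨-, hA | hA⟩; exact hA he'; omega⟩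
    · left
      exact ⟨⟨he, Or.inl he'⟩, by rintro ⟨hB, -⟩; exact he' hB⟩
  · by_cases he' : endAt B u v
    · rcases lt_or_gt_of_ne hidx with hlt | hlt
      · left
        exact ⟨⟨he', Or.inr hlt⟩, by rintro ⟨-, hA | hA⟩; exact hA he'; omega⟩
      · right
        exact ⟨⟨he, Or.inr hlt⟩, by rintro ⟨-, hA | hA⟩; exact hA he; omega⟩
    · right
      exact ⟨⟨he, Or.inl he'⟩, by rintro ⟨hB, -⟩; exact he' hB⟩

omit hG in
lemma ret_end {u v : V} (h : ret B idx u v) : (B u).IsEnd (cp B u v) := h.1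

end Constr2

end CPGAux

namespace CPGAux

namespace Box

lemma inw_cases (b : Box) (p : ℤ×ℤ) : b.inw p = b.dirv ∨ b.inw p = -b.dirv := by
  unfold inw; split
  · exact Or.inl rfl
  · exact Or.inr rfl

lemma zone_mem1 (b : Box) (p : ℤ×ℤ) (hp : b.IsEnd p) : b.sc5.mem (sc p + b.inw p) := by
  have := b.zone_mem p hp 1 (by omega) (by omega)
  have e : sc p + (1 * (b.inw p).1, 1 * (b.inw p).2) = sc p + b.inw p := by
    simp
  rwa [e] at this

lemma zone_mem2 (b : Box) (p : ℤ×ℤ) (hp : b.IsEnd p) :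
    b.sc5.mem (sc p + b.inw p + b.inw p) := by
  have := b.zone_mem p hp 2 (by omega) (by omega)
  have e : sc p + (2 * (b.inw p).1, 2 * (b.inw p).2) = sc p + b.inw p + b.inw p := by
    simp [Prod.ext_iff]; constructor <;> ring
  rwa [e] at this

lemma zone_mem0 (b : Box) {p : ℤ×ℤ} (hp : b.mem p) : b.sc5.mem (sc p) := by
  obtain ⟨m1, m2, m3, m4⟩ := hp
  refine ⟨?_, ?_, ?_, ?_⟩ <;> simp [sc, sc5] <;> omega

lemma zone_ne1 {d : ℤ×ℤ} (hd : d = (1,0) ∨ d = (-1,0) ∨ d = (0,1) ∨ d = (0,-1))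
    (q r : ℤ×ℤ) : sc q + d ≠ sc r := by
  have := zone_ne_sc hd q r 1 (by omega) (by omega)
  rcases hd with h | h | h | h <;> subst h <;> simpa using this

lemma zone_ne2 {d : ℤ×ℤ} (hd : d = (1,0) ∨ d = (-1,0) ∨ d = (0,1) ∨ d = (0,-1))
    (q r : ℤ×ℤ) : sc q + d + d ≠ sc r := by
  have := zone_ne_sc hd q r 2 (by omega) (by omega)
  rcases hd with h | h | h | h <;> subst h <;>
    simp [sc, Prod.ext_iff] at this ⊢ <;> omega

lemma sc_inj {q r : ℤ×ℤ} (h : sc q = sc r) : q = r := by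
  simp [sc, Prod.ext_iff] at h ⊢
  omega

end Box

section Constr3

variable {V : Type} {G : SimpleGraph V} {B : V → Box} {idx : V → ℕ}

/-- membership in the new vertex box -/
lemma newV_mem_iff (G : SimpleGraph V) (B : V → Box) (idx : V → ℕ) (u : V) (z : ℤ×ℤ) :
    (newV G B idx u).mem z ↔ (B u).sc5.mem z ∧
      (rlo G B idx u = 2 → z ≠ sc (B u).lo ∧ z ≠ sc (B u).lo + (B u).dirv) ∧
      (rhi G B idx u = 2 → z ≠ sc (B u).hi ∧ z ≠ sc (B u).hi - (B u).dirv) := by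
  have hx := (B u).hx
  have hy := (B u).hy
  have hne := (B u).hne
  have hdeg := (B u).hdeg
  unfold newV
  split_ifs with hor
  · rw [Box.dirv_horiz _ hor]
    rcases rlo_bounds G B idx u with h1 | h1 <;> rcases rhi_bounds G B idx u with h2 | h2 <;>
      simp only [h1, h2] <;>
      simp [Box.mem, Box.sc5, sc, Box.lo, Box.hi, Prod.ext_iff, hor] <;> omega
  · have hxeq := (B u).vert_xeq hor
    rw [Box.dirv_vert _ hor]
    rcases rlo_bounds G B idx u with h1 | h1 <;> rcases rhi_bounds G B idx u with h2 | h2 <;>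
      simp only [h1, h2] <;>
      simp [Box.mem, Box.sc5, sc, Box.lo, Box.hi, Prod.ext_iff, hxeq] <;> omega

lemma newV_sub (G : SimpleGraph V) (B : V → Box) (idx : V → ℕ) (u : V) (z : ℤ×ℤ)
    (h : (newV G B idx u).mem z) : (B u).sc5.mem z :=
  ((newV_mem_iff G B idx u z).1 h).1

variable (hG : Good G B idx)

include hG

/-- two scaled boxes only meet at the scaled contact point -/
lemma scaled_inter {u v : V} (hne : u ≠ v) {z : ℤ×ℤ}
    (hu : (B u).sc5.mem z) (hv : (B v).sc5.mem z) :
    G.Adj u v ∧ z = sc (cp B u v) := by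
  obtain ⟨a1, a2, a3, a4⟩ := hu
  obtain ⟨b1, b2, b3, b4⟩ := hv
  simp only [Box.sc5] at a1 a2 a3 a4 b1 b2 b3 b4
  have hxu := (B u).hx
  have hyu := (B u).hy
  have hxv := (B v).hx
  have hyv := (B v).hy
  by_cases horU : (B u).y1 = (B u).y2 <;> by_cases horV : (B v).y1 = (B v).y2
  · -- both horizontal
    have hyy : (B u).y1 = (B v).y1 := by omega
    have hwu : (B u).mem (max (B u).x1 (B v).x1, (B u).y1) := by
      unfold Box.mem; dsimp; omega
    have hwv : (B v).mem (max (B u).x1 (B v).x1, (B u).y1) := by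
      unfold Box.mem; dsimp; omega
    have hw'u : (B u).mem (min (B u).x2 (B v).x2, (B u).y1) := by
      unfold Box.mem; dsimp; omega
    have hw'v : (B v).mem (min (B u).x2 (B v).x2, (B u).y1) := by
      unfold Box.mem; dsimp; omega
    have hadj := hG.adj_of u v hne ⟨_, hwu, hwv⟩
    have h1 := cp_spec hG hne hwu hwv
    have h2 := cp_spec hG hne hw'u hw'v
    have heq : (max (B u).x1 (B v).x1, (B u).y1) = (min (B u).x2 (B v).x2, (B u).y1) := h1.trans h2.symm
    simp only [Prod.ext_iff] at heq
    refine ⟨hadj, ?_⟩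
    rw [← h1]
    simp [sc, Prod.ext_iff]
    omega
  · -- u horizontal, v vertical
    have hxeqv := (B v).vert_xeq horV
    have hwu : (B u).mem ((B v).x1, (B u).y1) := by unfold Box.mem; dsimp; omega
    have hwv : (B v).mem ((B v).x1, (B u).y1) := by unfold Box.mem; dsimp; omega
    have hadj := hG.adj_of u v hne ⟨_, hwu, hwv⟩
    have h1 := cp_spec hG hne hwu hwv
    refine ⟨hadj, ?_⟩
    rw [← h1]
    simp [sc, Prod.ext_iff]
    omega
  · -- u vertical, v horizontal
    have hxequ := (B u).vert_xeq horU
    have hwu : (B u).mem ((B u).x1, (B v).y1) := by unfold Box.mem; dsimp; omega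
    have hwv : (B v).mem ((B u).x1, (B v).y1) := by unfold Box.mem; dsimp; omega
    have hadj := hG.adj_of u v hne ⟨_, hwu, hwv⟩
    have h1 := cp_spec hG hne hwu hwv
    refine ⟨hadj, ?_⟩
    rw [← h1]
    simp [sc, Prod.ext_iff]
    omega
  · -- both vertical
    have hxequ := (B u).vert_xeq horU
    have hxeqv := (B v).vert_xeq horV
    have hxx : (B u).x1 = (B v).x1 := by omega
    have hwu : (B u).mem ((B u).x1, max (B u).y1 (B v).y1) := by
      unfold Box.mem; dsimp; omega
    have hwv : (B v).mem ((B u).x1, max (B u).y1 (B v).y1) := by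
      unfold Box.mem; dsimp; omega
    have hw'u : (B u).mem ((B u).x1, min (B u).y2 (B v).y2) := by
      unfold Box.mem; dsimp; omega
    have hw'v : (B v).mem ((B u).x1, min (B u).y2 (B v).y2) := by
      unfold Box.mem; dsimp; omega
    have hadj := hG.adj_of u v hne ⟨_, hwu, hwv⟩
    have h1 := cp_spec hG hne hwu hwv
    have h2 := cp_spec hG hne hw'u hw'v
    have heq : ((B u).x1, max (B u).y1 (B v).y1) = ((B u).x1, min (B u).y2 (B v).y2) := h1.trans h2.symm
    simp only [Prod.ext_iff] at heq
    refine ⟨hadj, ?_⟩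
    rw [← h1]
    simp [sc, Prod.ext_iff]
    omega

end Constr3

end CPGAux

namespace CPGAux

section Constr4

variable {V : Type} {G : SimpleGraph V} {B : V → Box} {idx : V → ℕ}

lemma edgeB_mem_ret {a b : V} (h : ret B idx a b) (z : ℤ×ℤ) :
    (edgeB B idx a b).mem z ↔
      z = sc (cp B a b) + (B a).inw (cp B a b) ∨
      z = sc (cp B a b) + (B a).inw (cp B a b) + (B a).inw (cp B a b) := by
  unfold edgeB
  rw [if_pos h, Box.ub_mem _ _ (Box.inw_unit _ _)]

lemma edgeB_mem_nret {a b : V} (h : ¬ ret B idx a b) (z : ℤ×ℤ) :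
    (edgeB B idx a b).mem z ↔
      z = sc (cp B b a) ∨ z = sc (cp B b a) + (B b).inw (cp B b a) := by
  unfold edgeB
  rw [if_neg h, Box.ub_mem _ _ (Box.inw_unit _ _)]

lemma edgeB_isEnd {a b : V} {z : ℤ×ℤ} (hm : (edgeB B idx a b).mem z) :
    (edgeB B idx a b).IsEnd z := by
  unfold edgeB at hm ⊢
  split_ifs at hm ⊢ with h
  · rw [Box.ub_mem _ _ (Box.inw_unit _ _)] at hm
    rw [Box.ub_isEnd _ _ (Box.inw_unit _ _)]
    exact hm
  · rw [Box.ub_mem _ _ (Box.inw_unit _ _)] at hm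
    rw [Box.ub_isEnd _ _ (Box.inw_unit _ _)]
    exact hm

variable (hG : Good G B idx)

include hG

/-- canonical description of edge-box points -/
lemma edgeB_zone {a b : V} (hadj : G.Adj a b) {z : ℤ×ℤ}
    (hm : (edgeB B idx a b).mem z) :
    ∃ (w x : V) (k : ℤ), ret B idx w x ∧ G.Adj w x ∧ 0 ≤ k ∧ k ≤ 2 ∧
      ((w = a ∧ x = b ∧ 1 ≤ k) ∨ (w = b ∧ x = a ∧ k ≤ 1)) ∧
      z = sc (cp B w x) + (k * ((B w).inw (cp B w x)).1, k * ((B w).inw (cp B w x)).2) := by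
  by_cases h : ret B idx a b
  · rw [edgeB_mem_ret h] at hm
    rcases hm with hz | hz
    · refine ⟨a, b, 1, h, hadj, by omega, by omega, Or.inl ⟨rfl, rfl, le_refl _⟩, ?_⟩
      rw [hz]; simp
    · refine ⟨a, b, 2, h, hadj, by omega, by omega, Or.inl ⟨rfl, rfl, by omega⟩, ?_⟩
      rw [hz]; apply Prod.ext <;> simp <;> ring
  · have hr : ret B idx b a := by
      rcases ret_choice hG hadj with ⟨h1, -⟩ | ⟨h1, -⟩
      · exact absurd h1 h
      · exact h1
    rw [edgeB_mem_nret h] at hm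
    rcases hm with hz | hz
    · refine ⟨b, a, 0, hr, hadj.symm, by omega, by omega, Or.inr ⟨rfl, rfl, by omega⟩, ?_⟩
      rw [hz]; simp
    · refine ⟨b, a, 1, hr, hadj.symm, by omega, by omega, Or.inr ⟨rfl, rfl, le_refl _⟩, ?_⟩
      rw [hz]; simp

/-- edge boxes lie in the scaled box of the retracted vertex -/
lemma edgeB_sub {a b : V} (hadj : G.Adj a b) {z : ℤ×ℤ}
    (hm : (edgeB B idx a b).mem z) :
    ∃ w x : V, ret B idx w x ∧ G.Adj w x ∧ ((w = a ∧ x = b) ∨ (w = b ∧ x = a)) ∧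
      (B w).sc5.mem z := by
  obtain ⟨w, x, k, hr, hwx, hk0, hk2, hcase, hz⟩ := edgeB_zone hG hadj hm
  refine ⟨w, x, hr, hwx, by tauto, ?_⟩
  rw [hz]
  exact (B w).zone_mem (cp B w x) hr.1 k hk0 (by omega)

end Constr4

end CPGAux

namespace CPGAux

namespace Box

lemma dirv_unit4 (b : Box) :
    b.dirv = (1,0) ∨ b.dirv = (-1,0) ∨ b.dirv = (0,1) ∨ b.dirv = (0,-1) := by
  rcases b.dirv_unit with h | h
  · exact Or.inl h
  · exact Or.inr (Or.inr (Or.inl h))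

/-- two zone points of the same box can only collide if the centres agree -/
lemma zone_collide (b : Box) {p1 p2 : ℤ×ℤ} (h1 : b.mem p1) (h2 : b.mem p2)
    {d1 d2 : ℤ×ℤ} (hd1 : d1 = b.dirv ∨ d1 = -b.dirv) (hd2 : d2 = b.dirv ∨ d2 = -b.dirv)
    {k1 k2 : ℤ} (hk1 : 0 ≤ k1) (hk1' : k1 ≤ 2) (hk2 : 0 ≤ k2) (hk2' : k2 ≤ 2)
    (hz : sc p1 + (k1 * d1.1, k1 * d1.2) = sc p2 + (k2 * d2.1, k2 * d2.2)) : p1 = p2 := by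
  obtain ⟨a1, a2, a3, a4⟩ := h1
  obtain ⟨b1, b2, b3, b4⟩ := h2
  by_cases hor : b.y1 = b.y2
  · rw [dirv_horiz _ hor] at hd1 hd2
    rcases hd1 with h | h <;> rcases hd2 with h' | h' <;> subst h <;> subst h' <;>
      simp [sc, Prod.ext_iff] at hz ⊢ <;> omega
  · have hxeq := b.vert_xeq hor
    rw [dirv_vert _ hor] at hd1 hd2
    rcases hd1 with h | h <;> rcases hd2 with h' | h' <;> subst h <;> subst h' <;>
      simp [sc, Prod.ext_iff] at hz ⊢ <;> omega

end Box

section Constr5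

variable {V : Type} {G : SimpleGraph V} {B : V → Box} {idx : V → ℕ}

lemma rlo_eq_two {u v : V} (hadj : G.Adj u v) (hr : ret B idx u v)
    (hp : cp B u v = (B u).lo) : rlo G B idx u = 2 := by
  unfold rlo
  rw [if_pos ⟨v, hadj, hr, hp⟩]

lemma rhi_eq_two {u v : V} (hadj : G.Adj u v) (hr : ret B idx u v)
    (hp : cp B u v = (B u).hi) : rhi G B idx u = 2 := by
  unfold rhi
  rw [if_pos ⟨v, hadj, hr, hp⟩]

lemma rlo_wit {u : V} (h2 : rlo G B idx u = 2) :
    ∃ v, G.Adj u v ∧ ret B idx u v ∧ cp B u v = (B u).lo := by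
  by_cases h : ∃ v, G.Adj u v ∧ ret B idx u v ∧ cp B u v = (B u).lo
  · exact h
  · exfalso; unfold rlo at h2; rw [if_neg h] at h2; omega

lemma rhi_wit {u : V} (h2 : rhi G B idx u = 2) :
    ∃ v, G.Adj u v ∧ ret B idx u v ∧ cp B u v = (B u).hi := by
  by_cases h : ∃ v, G.Adj u v ∧ ret B idx u v ∧ cp B u v = (B u).hi
  · exact h
  · exfalso; unfold rhi at h2; rw [if_neg h] at h2; omega

/-- points at offsets 0 or 1 from a retracting contact are excluded from `newV` -/
lemma newV_excl {u v : V} (hadj : G.Adj u v) (hr : ret B idx u v) {k : ℤ}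
    (hk : k = 0 ∨ k = 1) :
    ¬ (newV G B idx u).mem
      (sc (cp B u v) + (k * ((B u).inw (cp B u v)).1, k * ((B u).inw (cp B u v)).2)) := by
  intro hm
  obtain ⟨s1, s2, s3⟩ := (newV_mem_iff G B idx u _).1 hm
  rcases ret_end hr with hp | hp
  · have h2 := rlo_eq_two hadj hr hp
    obtain ⟨n1, n2⟩ := s2 h2
    rw [show cp B u v = ((B u).x1, (B u).y1) from hp, Box.inw_lo] at n1 n2
    rcases hk with rfl | rfl
    · exact n1 (by simp [Box.lo])
    · exact n2 (by simp [Box.lo])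
  · have h2 := rhi_eq_two hadj hr hp
    obtain ⟨n1, n2⟩ := s3 h2
    rw [show cp B u v = ((B u).x2, (B u).y2) from hp, Box.inw_hi] at n1 n2
    rcases hk with rfl | rfl
    · exact n1 (by simp [Box.hi])
    · exact n2 (by
        simp only [Box.hi]
        apply Prod.ext <;> simp [sc] <;> ring)

/-- the point at offset 2 from a retracting contact belongs to `newV` -/
lemma newV_incl2 {u v : V} (hadj : G.Adj u v) (hr : ret B idx u v) :
    (newV G B idx u).mem
      (sc (cp B u v) + (B u).inw (cp B u v) + (B u).inw (cp B u v)) := by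
  have hx := (B u).hx
  have hy := (B u).hy
  have hne := (B u).hne
  have hdeg := (B u).hdeg
  rw [newV_mem_iff]
  refine ⟨Box.zone_mem2 _ _ (ret_end hr), ?_, ?_⟩
  · intro h2
    rcases ret_end hr with hp | hp
    · rw [show cp B u v = ((B u).x1, (B u).y1) from hp, Box.inw_lo]
      by_cases hor : (B u).y1 = (B u).y2
      · rw [Box.dirv_horiz _ hor]
        constructor <;> simp [sc, Box.lo, Prod.ext_iff] <;> omega
      · rw [Box.dirv_vert _ hor]
        constructor <;> simp [sc, Box.lo, Prod.ext_iff] <;> omega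
    · rw [show cp B u v = ((B u).x2, (B u).y2) from hp, Box.inw_hi]
      by_cases hor : (B u).y1 = (B u).y2
      · rw [Box.dirv_horiz _ hor]
        constructor <;> simp [sc, Box.lo, Box.hi, Prod.ext_iff] <;> omega
      · have hxeq := (B u).vert_xeq hor
        rw [Box.dirv_vert _ hor]
        constructor <;> simp [sc, Box.lo, Box.hi, Prod.ext_iff] <;> omega
  · intro h2
    rcases ret_end hr with hp | hp
    · rw [show cp B u v = ((B u).x1, (B u).y1) from hp, Box.inw_lo]
      by_cases hor : (B u).y1 = (B u).y2
      · rw [Box.dirv_horiz _ hor]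
        constructor <;> simp [sc, Box.lo, Box.hi, Prod.ext_iff] <;> omega
      · have hxeq := (B u).vert_xeq hor
        rw [Box.dirv_vert _ hor]
        constructor <;> simp [sc, Box.lo, Box.hi, Prod.ext_iff] <;> omega
    · rw [show cp B u v = ((B u).x2, (B u).y2) from hp, Box.inw_hi]
      by_cases hor : (B u).y1 = (B u).y2
      · rw [Box.dirv_horiz _ hor]
        constructor <;> simp [sc, Box.hi, Prod.ext_iff] <;> omega
      · rw [Box.dirv_vert _ hor]
        constructor <;> simp [sc, Box.hi, Prod.ext_iff] <;> omega

variable (hG : Good G B idx)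

include hG

/-- a contact point of `u` with `v` that does not retract `u` stays in `newV u` -/
lemma newV_incl0 {u v : V} (hadj : G.Adj u v) (hnr : ¬ ret B idx u v) :
    (newV G B idx u).mem (sc (cp B u v)) := by
  rw [newV_mem_iff]
  refine ⟨Box.zone_mem0 _ (cp_mem hG hadj).1, ?_, ?_⟩
  · intro h2
    obtain ⟨v', hav', hrv', hcpv'⟩ := rlo_wit h2
    constructor
    · intro he
      have he' : cp B u v = (B u).lo := Box.sc_inj he
      have hvv' : v ≠ v' := by
        intro h; subst h; exact hnr hrv'
      have hmv' : (B v').mem (cp B u v) := by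
        rw [he', ← hcpv']; exact (cp_mem hG hav').2
      exact hG.tri u v v' (cp B u v) hadj.ne hav'.ne hvv'
        (cp_mem hG hadj).1 (cp_mem hG hadj).2 hmv'
    · intro he
      exact Box.zone_ne1 (B u).dirv_unit4 _ _ he.symm
  · intro h2
    obtain ⟨v', hav', hrv', hcpv'⟩ := rhi_wit h2
    constructor
    · intro he
      have he' : cp B u v = (B u).hi := Box.sc_inj he
      have hvv' : v ≠ v' := by
        intro h; subst h; exact hnr hrv'
      have hmv' : (B v').mem (cp B u v) := by
        rw [he', ← hcpv']; exact (cp_mem hG hav').2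
      exact hG.tri u v v' (cp B u v) hadj.ne hav'.ne hvv'
        (cp_mem hG hadj).1 (cp_mem hG hadj).2 hmv'
    · intro he
      have : sc (B u).hi - (B u).dirv + (B u).dirv = sc (cp B u v) + (B u).dirv := by
        rw [← he]
      simp only [sub_add_cancel] at this
      exact Box.zone_ne1 (B u).dirv_unit4 _ _ this.symm

/-- two new vertex boxes never meet -/
lemma K_ll {u v : V} (hne : u ≠ v) (z : ℤ×ℤ) :
    ¬ ((newV G B idx u).mem z ∧ (newV G B idx v).mem z) := by
  rintro ⟨h1, h2⟩
  obtain ⟨hadj, hz⟩ := scaled_inter hG hne (newV_sub G B idx u z h1) (newV_sub G B idx v z h2)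
  rcases ret_choice hG hadj with ⟨hr, -⟩ | ⟨hr, -⟩
  · apply newV_excl hadj hr (Or.inl rfl)
    have : sc (cp B u v) + ((0:ℤ) * ((B u).inw (cp B u v)).1, (0:ℤ) * ((B u).inw (cp B u v)).2)
        = z := by rw [hz]; simp
    rw [this]; exact h1
  · apply newV_excl hadj.symm hr (Or.inl rfl)
    have : sc (cp B v u) + ((0:ℤ) * ((B v).inw (cp B v u)).1, (0:ℤ) * ((B v).inw (cp B v u)).2)
        = z := by rw [hz, cp_comm hG hne]; simp
    rw [this]; exact h2

end Constr5

end CPGAux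

namespace CPGAux

section Constr6

variable {V : Type} {G : SimpleGraph V} {B : V → Box} {idx : V → ℕ}

variable (hG : Good G B idx)

include hG

omit hG in
/-- contact of `newV a` with the edge box when `a` is retracted -/
lemma K_le_ret {a b : V} (hadj : G.Adj a b) (h : ret B idx a b) (z : ℤ×ℤ) :
    ((newV G B idx a).mem z ∧ (edgeB B idx a b).mem z) ↔
      z = sc (cp B a b) + (B a).inw (cp B a b) + (B a).inw (cp B a b) := by
  constructor
  · rintro ⟨h1, h2⟩
    rw [edgeB_mem_ret h] at h2
    rcases h2 with hz | hz
    · exfalso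
      apply newV_excl hadj h (Or.inr rfl)
      have e : sc (cp B a b) + ((1:ℤ) * ((B a).inw (cp B a b)).1,
          (1:ℤ) * ((B a).inw (cp B a b)).2) = z := by rw [hz]; simp
      rw [e]; exact h1
    · exact hz
  · intro hz
    refine ⟨by rw [hz]; exact newV_incl2 hadj h, ?_⟩
    rw [edgeB_mem_ret h]
    exact Or.inr hz

/-- contact of `newV a` with the edge box when `b` is retracted -/
lemma K_le_nret {a b : V} (hadj : G.Adj a b) (h : ¬ ret B idx a b) (z : ℤ×ℤ) :
    ((newV G B idx a).mem z ∧ (edgeB B idx a b).mem z) ↔ z = sc (cp B b a) := by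
  have hr : ret B idx b a := by
    rcases ret_choice hG hadj with ⟨h1, -⟩ | ⟨h1, -⟩
    · exact absurd h1 h
    · exact h1
  constructor
  · rintro ⟨h1, h2⟩
    rw [edgeB_mem_nret h] at h2
    rcases h2 with hz | hz
    · exact hz
    · exfalso
      have h5b : (B b).sc5.mem z := by
        rw [hz]; exact Box.zone_mem1 _ _ (ret_end hr)
      obtain ⟨-, hzc⟩ := scaled_inter hG hadj.ne (newV_sub G B idx a z h1) h5b
      exact Box.zone_ne1 (Box.inw_unit _ _) _ _ (hz.symm.trans hzc)
  · intro hz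
    constructor
    · rw [hz, cp_comm hG hadj.symm.ne]
      exact newV_incl0 hG hadj h
    · rw [edgeB_mem_nret h]
      exact Or.inl hz

/-- a new vertex box meets no edge box of a foreign edge -/
lemma K_le_far {u a b : V} (hadj : G.Adj a b) (hua : u ≠ a) (hub : u ≠ b) (z : ℤ×ℤ) :
    ¬ ((newV G B idx u).mem z ∧ (edgeB B idx a b).mem z) := by
  rintro ⟨h1, h2⟩
  obtain ⟨w, x, k, hr, hwx, hk0, hk2, hcase, hz⟩ := edgeB_zone hG hadj h2
  have huw : u ≠ w := by rcases hcase with ⟨rfl, -, -⟩ | ⟨rfl, -, -⟩ <;> assumption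
  have hux : u ≠ x := by rcases hcase with ⟨-, rfl, -⟩ | ⟨-, rfl, -⟩ <;> assumption
  have h5w : (B w).sc5.mem z := by
    rw [hz]; exact (B w).zone_mem _ hr.1 k hk0 (by omega)
  obtain ⟨hadj2, hzc⟩ := scaled_inter hG huw (newV_sub G B idx u z h1) h5w
  rw [cp_comm hG huw] at hzc
  by_cases hk : k = 0
  · subst hk
    have hzp : z = sc (cp B w x) := by rw [hz]; simp
    have hpe : cp B w x = cp B w u := Box.sc_inj (hzp.symm.trans hzc)
    have hmu : (B u).mem (cp B w x) := by
      rw [hpe]; exact (cp_mem hG hadj2.symm).2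
    exact hG.tri w x u (cp B w x) hwx.ne (Ne.symm huw) (Ne.symm hux)
      (cp_mem hG hwx).1 (cp_mem hG hwx).2 hmu
  · exact Box.zone_ne_sc (Box.inw_unit _ _) _ _ k (by omega) (by omega) (hz.symm.trans hzc)

/-- a new vertex box does not meet the edge box of its own edge pointing the other way -/
lemma K_le_wrong {a u : V} (hadj : G.Adj a u) (z : ℤ×ℤ) :
    ¬ ((newV G B idx u).mem z ∧ (edgeB B idx a u).mem z) := by
  rintro ⟨h1, h2⟩
  obtain ⟨w, x, k, hr, hwx, hk0, hk2, hcase, hz⟩ := edgeB_zone hG hadj h2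
  rcases hcase with ⟨hw, hx, hk1⟩ | ⟨hw, hx, hk1⟩
  · -- w = a retracted, u ≠ a
    have huw : u ≠ w := by rw [hw]; exact hadj.ne.symm
    have h5w : (B w).sc5.mem z := by
      rw [hz]; exact (B w).zone_mem _ hr.1 k hk0 (by omega)
    obtain ⟨hadj2, hzc⟩ := scaled_inter hG huw (newV_sub G B idx u z h1) h5w
    rw [cp_comm hG huw] at hzc
    exact Box.zone_ne_sc (Box.inw_unit _ _) _ _ k (by omega) (by omega) (hz.symm.trans hzc)
  · -- w = u retracted: excluded zone
    rw [hw, hx] at hr hz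
    rw [hz] at h1
    exact newV_excl hadj.symm hr (by omega) h1

/-- the two edge boxes of one edge meet exactly in the middle point -/
lemma K_ee_partner {a b : V} (hadj : G.Adj a b) (h : ret B idx a b) (z : ℤ×ℤ) :
    ((edgeB B idx a b).mem z ∧ (edgeB B idx b a).mem z) ↔
      z = sc (cp B a b) + (B a).inw (cp B a b) := by
  have hnr : ¬ ret B idx b a := by
    rcases ret_choice hG hadj with ⟨-, h2⟩ | ⟨-, h2⟩
    · exact h2
    · exact absurd h h2
  have hD := Box.inw_unit (B a) (cp B a b)
  have hne1 : sc (cp B a b) + (B a).inw (cp B a b) ≠ sc (cp B a b) := by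
    rcases hD with h' | h' | h' | h' <;> rw [h'] <;> simp [sc, Prod.ext_iff] <;> omega
  have hne2 : sc (cp B a b) + (B a).inw (cp B a b) + (B a).inw (cp B a b) ≠ sc (cp B a b) := by
    rcases hD with h' | h' | h' | h' <;> rw [h'] <;> simp [sc, Prod.ext_iff] <;> omega
  have hne3 : sc (cp B a b) + (B a).inw (cp B a b) + (B a).inw (cp B a b) ≠
      sc (cp B a b) + (B a).inw (cp B a b) := fun he => hne1 (add_right_cancel he)
  rw [edgeB_mem_ret h, edgeB_mem_nret hnr]
  constructor
  · rintro ⟨hA | hA, hB | hB⟩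
    · exact absurd (hA.symm.trans hB) hne1
    · exact hA
    · exact absurd (hA.symm.trans hB) hne2
    · exact absurd (hA.symm.trans hB) hne3
  · intro hz
    exact ⟨Or.inl hz, Or.inr hz⟩

/-- edge boxes of different edges never meet -/
lemma K_ee_far {a b a' b' : V} (h1 : G.Adj a b) (h2 : G.Adj a' b')
    (hd1 : ¬ (a = a' ∧ b = b')) (hd2 : ¬ (a = b' ∧ b = a')) (z : ℤ×ℤ) :
    ¬ ((edgeB B idx a b).mem z ∧ (edgeB B idx a' b').mem z) := by
  rintro ⟨m1, m2⟩
  obtain ⟨w, x, k, hr, hwx, hk0, hk2, hcase, hz⟩ := edgeB_zone hG h1 m1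
  obtain ⟨w', x', k', hr', hwx', hk0', hk2', hcase', hz'⟩ := edgeB_zone hG h2 m2
  have hdd1 : ¬ (w = w' ∧ x = x') := by
    rcases hcase with ⟨rfl, rfl, -⟩ | ⟨rfl, rfl, -⟩ <;>
      rcases hcase' with ⟨rfl, rfl, -⟩ | ⟨rfl, rfl, -⟩
    · exact hd1
    · exact fun ⟨p, q⟩ => hd2 ⟨p, q⟩
    · exact fun ⟨p, q⟩ => hd2 ⟨q, p⟩
    · exact fun ⟨p, q⟩ => hd1 ⟨q, p⟩
  have hdd2 : ¬ (w = x' ∧ x = w') := by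
    rcases hcase with ⟨rfl, rfl, -⟩ | ⟨rfl, rfl, -⟩ <;>
      rcases hcase' with ⟨rfl, rfl, -⟩ | ⟨rfl, rfl, -⟩
    · exact fun ⟨p, q⟩ => hd2 ⟨p, q⟩
    · exact hd1
    · exact fun ⟨p, q⟩ => hd1 ⟨q, p⟩
    · exact fun ⟨p, q⟩ => hd2 ⟨q, p⟩
  by_cases hww : w = w'
  · subst hww
    have hxx' : x ≠ x' := fun h => hdd1 ⟨rfl, h⟩
    by_cases hpp : cp B w x = cp B w x'
    · exact hG.tri w x x' (cp B w x) hwx.ne hwx'.ne hxx'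
        (cp_mem hG hwx).1 (cp_mem hG hwx).2 (by rw [hpp]; exact (cp_mem hG hwx').2)
    · apply hpp
      apply Box.zone_collide (B w) (cp_mem hG hwx).1 (cp_mem hG hwx').1
        (Box.inw_cases _ _) (Box.inw_cases _ _) hk0 hk2 hk0' hk2'
      rw [← hz, ← hz']
  · have h5w : (B w).sc5.mem z := by
      rw [hz]; exact (B w).zone_mem _ hr.1 k hk0 (by omega)
    have h5w' : (B w').sc5.mem z := by
      rw [hz']; exact (B w').zone_mem _ hr'.1 k' hk0' (by omega)
    obtain ⟨hadj3, hzc⟩ := scaled_inter hG hww h5w h5w'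
    obtain ⟨hadj4, hzc'⟩ := scaled_inter hG (Ne.symm hww) h5w' h5w
    have hk_eq : k = 0 := by
      by_contra hk'
      exact Box.zone_ne_sc (Box.inw_unit _ _) _ _ k (by omega) (by omega) (hz.symm.trans hzc)
    have hk'_eq : k' = 0 := by
      by_contra hk'
      exact Box.zone_ne_sc (Box.inw_unit _ _) _ _ k' (by omega) (by omega) (hz'.symm.trans hzc')
    have hzp1 : z = sc (cp B w x) := by rw [hz, hk_eq]; simp
    have hzp2 : z = sc (cp B w' x') := by rw [hz', hk'_eq]; simp
    have hp1 : cp B w x = cp B w w' := Box.sc_inj (hzp1.symm.trans hzc)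
    have hp2 : cp B w' x' = cp B w' w := Box.sc_inj (hzp2.symm.trans hzc')
    have hmem_w' : (B w').mem (cp B w x) := by rw [hp1]; exact (cp_mem hG hadj3).2
    have hxw' : x = w' := by
      by_contra hxw
      exact hG.tri w x w' (cp B w x) hwx.ne hww hxw
        (cp_mem hG hwx).1 (cp_mem hG hwx).2 hmem_w'
    have hmem_w : (B w).mem (cp B w' x') := by rw [hp2]; exact (cp_mem hG hadj4).2
    have hx'w : x' = w := by
      by_contra h
      exact hG.tri w' x' w (cp B w' x') hwx'.ne (Ne.symm hww) h
        (cp_mem hG hwx').1 (cp_mem hG hwx').2 hmem_w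
    exact hdd2 ⟨hx'w.symm, hxw'⟩

end Constr6

end CPGAux

namespace CPGAux

lemma box_two_common {b1 b2 : Box} {z z' : ℤ×ℤ} (hz : z ≠ z')
    (m1 : b1.mem z) (m2 : b2.mem z) (m3 : b1.mem z') (m4 : b2.mem z') :
    ∃ w d : ℤ×ℤ, (d = ((1:ℤ),(0:ℤ)) ∨ d = ((0:ℤ),(1:ℤ))) ∧
      b1.mem w ∧ b1.mem (w+d) ∧ b2.mem w ∧ b2.mem (w+d) := by
  obtain ⟨a1, a2, a3, a4⟩ := m1
  obtain ⟨b1', b2', b3', b4'⟩ := m2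
  obtain ⟨c1, c2, c3, c4⟩ := m3
  obtain ⟨d1, d2, d3, d4⟩ := m4
  have hzz : ¬ (z.1 = z'.1 ∧ z.2 = z'.2) := by
    intro ⟨e1, e2⟩; exact hz (Prod.ext e1 e2)
  by_cases hy : z.2 = z'.2
  · refine ⟨(min z.1 z'.1, z.2), (1,0), Or.inl rfl, ?_, ?_, ?_, ?_⟩ <;>
      simp [Box.mem] <;> omega
  · have h1deg : b1.y1 ≠ b1.y2 → b1.x1 = b1.x2 := fun h => b1.vert_xeq h
    have hb1 : b1.x1 = b1.x2 := by
      rcases b1.hdeg with h | h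
      · exact h
      · omega
    have hb2 : b2.x1 = b2.x2 := by
      rcases b2.hdeg with h | h
      · exact h
      · omega
    refine ⟨(z.1, min z.2 z'.2), (0,1), Or.inr rfl, ?_, ?_, ?_, ?_⟩ <;>
      simp [Box.mem] <;> omega

section Sub

variable {V : Type} (G : SimpleGraph V)

lemma adj_sub_ll (u v : V) : ¬ (twoSubdivision G).Adj (Sum.inl u) (Sum.inl v) := by
  intro h; exact h.2.elim id id

lemma adj_sub_le (u : V) (e : {p : V × V // G.Adj p.1 p.2}) :
    (twoSubdivision G).Adj (Sum.inl u) (Sum.inr e) ↔ e.1.1 = u := by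
  exact ⟨fun h => h.2.elim id False.elim, fun h => ⟨Sum.inl_ne_inr, Or.inl h⟩⟩

lemma adj_sub_ee (e g : {p : V × V // G.Adj p.1 p.2}) :
    (twoSubdivision G).Adj (Sum.inr e) (Sum.inr g) ↔
      (e ≠ g ∧ e.1.1 = g.1.2 ∧ e.1.2 = g.1.1) := by
  simp only [twoSubdivision, SimpleGraph.fromRel_adj, twoSubRel]
  constructor
  · rintro ⟨hne, h | h⟩
    · exact ⟨fun he => hne (congrArg _ he), h⟩
    · exact ⟨fun he => hne (congrArg _ he), h.2.symm, h.1.symm⟩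
  · rintro ⟨hne, h1, h2⟩
    exact ⟨fun he => hne (Sum.inr_injective he), Or.inl ⟨h1, h2⟩⟩

end Sub

section Master

variable {V : Type} {G : SimpleGraph V} {B : V → Box} {idx : V → ℕ}

theorem good_to_rep (hG : Good G B idx) : IsBkCPG (twoSubdivision G) 0 := by
  -- at most one common point, pairwise
  have hsingle_le : ∀ (u : V) (e : {p : V × V // G.Adj p.1 p.2}) (z z' : ℤ×ℤ),
      (newV G B idx u).mem z → (edgeB B idx e.1.1 e.1.2).mem z →
      (newV G B idx u).mem z' → (edgeB B idx e.1.1 e.1.2).mem z' → z = z' := by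
    rintro u ⟨⟨a, b⟩, hab⟩ z z' h1 h2 h3 h4
    simp only at h2 h4
    by_cases hu : u = a
    · subst hu
      by_cases hret : ret B idx u b
      · rw [(K_le_ret hab hret z).mp ⟨h1, h2⟩, (K_le_ret hab hret z').mp ⟨h3, h4⟩]
      · rw [(K_le_nret hG hab hret z).mp ⟨h1, h2⟩, (K_le_nret hG hab hret z').mp ⟨h3, h4⟩]
    · by_cases hub : u = b
      · subst hub
        exact absurd ⟨h1, h2⟩ (K_le_wrong hG hab z)
      · exact absurd ⟨h1, h2⟩ (K_le_far hG hab (Ne.symm (fun h => hu h.symm)) hub z)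
  have hsingle : ∀ w1 w2 : SubdivV G, w1 ≠ w2 → ∀ z z' : ℤ×ℤ,
      (FN G B idx w1).mem z → (FN G B idx w2).mem z →
      (FN G B idx w1).mem z' → (FN G B idx w2).mem z' → z = z' := by
    rintro (u | e) (v | g) hne z z' h1 h2 h3 h4 <;> simp only [FN] at h1 h2 h3 h4
    · exact absurd ⟨h1, h2⟩ (K_ll hG (fun h => hne (congrArg _ h)) z)
    · exact hsingle_le u g z z' h1 h2 h3 h4
    · exact hsingle_le v e z z' h2 h1 h4 h3
    · obtain ⟨⟨a, b⟩, hab⟩ := e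
      obtain ⟨⟨a', b'⟩, ha'b'⟩ := g
      simp only at h1 h2 h3 h4 hab ha'b'
      have hne' : ¬ (a = a' ∧ b = b') := by
        rintro ⟨rfl, rfl⟩
        exact hne rfl
      by_cases hp : a = b' ∧ b = a'
      · obtain ⟨rfl, rfl⟩ := hp
        rcases ret_choice hG hab with ⟨hr, -⟩ | ⟨hr, -⟩
        · rw [(K_ee_partner hG hab hr z).mp ⟨h1, h2⟩, (K_ee_partner hG hab hr z').mp ⟨h3, h4⟩]
        · rw [(K_ee_partner hG hab.symm hr z).mp ⟨h2, h1⟩,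
            (K_ee_partner hG hab.symm hr z').mp ⟨h4, h3⟩]
      · exact absurd ⟨h1, h2⟩ (K_ee_far hG hab ha'b' hne' hp z)
  -- endpoint property
  have hends : ∀ w1 w2 : SubdivV G, w1 ≠ w2 → ∀ z : ℤ×ℤ,
      (FN G B idx w1).mem z → (FN G B idx w2).mem z →
      (FN G B idx w1).IsEnd z ∨ (FN G B idx w2).IsEnd z := by
    rintro (u | e) (v | g) hne z h1 h2 <;> simp only [FN] at h1 h2 ⊢
    · exact absurd ⟨h1, h2⟩ (K_ll hG (fun h => hne (congrArg _ h)) z)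
    · exact Or.inr (edgeB_isEnd h2)
    · exact Or.inl (edgeB_isEnd h1)
    · exact Or.inr (edgeB_isEnd h2)
  -- adjacency iff common point
  have hadj_iff : ∀ w1 w2 : SubdivV G, w1 ≠ w2 →
      ((twoSubdivision G).Adj w1 w2 ↔ ∃ z, (FN G B idx w1).mem z ∧ (FN G B idx w2).mem z) := by
    have hle : ∀ (u : V) (e : {p : V × V // G.Adj p.1 p.2}),
        (e.1.1 = u ↔ ∃ z, (newV G B idx u).mem z ∧ (edgeB B idx e.1.1 e.1.2).mem z) := by
      rintro u ⟨⟨a, b⟩, hab⟩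
      simp only
      constructor
      · rintro rfl
        by_cases hret : ret B idx a b
        · exact ⟨_, (K_le_ret hab hret _).mpr rfl⟩
        · exact ⟨_, (K_le_nret hG hab hret _).mpr rfl⟩
      · rintro ⟨z, h1, h2⟩
        by_contra hu
        by_cases hub : u = b
        · subst hub
          exact K_le_wrong hG hab z ⟨h1, h2⟩
        · exact K_le_far hG hab (fun h => hu h.symm) hub z ⟨h1, h2⟩
    rintro (u | e) (v | g) hne
    · constructor
      · intro h; exact absurd h (adj_sub_ll G u v)
      · rintro ⟨z, h1, h2⟩
        simp only [FN] at h1 h2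
        exact absurd ⟨h1, h2⟩ (K_ll hG (fun h => hne (congrArg _ h)) z)
    · rw [adj_sub_le]
      exact hle u g
    · refine ((twoSubdivision G).adj_comm _ _).trans ?_
      rw [adj_sub_le]
      rw [hle v e]
      constructor
      · rintro ⟨z, h1, h2⟩; exact ⟨z, h2, h1⟩
      · rintro ⟨z, h1, h2⟩; exact ⟨z, h2, h1⟩
    · rw [adj_sub_ee]
      obtain ⟨⟨a, b⟩, hab⟩ := e
      obtain ⟨⟨a', b'⟩, ha'b'⟩ := g
      simp only at hab ha'b' ⊢
      have hnesub : (⟨(a,b), hab⟩ : {p : V × V // G.Adj p.1 p.2}) ≠ ⟨(a',b'), ha'b'⟩ := by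
        intro h; exact hne (congrArg _ h)
      constructor
      · rintro ⟨-, h1, h2⟩
        subst h1; subst h2
        rcases ret_choice hG hab with ⟨hr, -⟩ | ⟨hr, -⟩
        · exact ⟨_, (K_ee_partner hG hab hr _).mpr rfl⟩
        · have hmm := (K_ee_partner hG hab.symm hr
            (sc (cp B b a) + (B b).inw (cp B b a))).mpr rfl
          exact ⟨_, hmm.2, hmm.1⟩
      · rintro ⟨z, h1, h2⟩
        refine ⟨hnesub, ?_⟩
        have hne' : ¬ (a = a' ∧ b = b') := by
          rintro ⟨rfl, rfl⟩
          exact hnesub rfl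
        by_cases hp : a = b' ∧ b = a'
        · exact ⟨hp.1, hp.2⟩
        · exact absurd ⟨h1, h2⟩ (K_ee_far hG hab ha'b' hne' hp z)
  -- build the representation
  refine ⟨⟨fun w => (FN G B idx w).toPath, ?_, ?_, ?_⟩, ?_⟩
  · intro w1 w2 hne p hp1 hp2
    rw [Box.mem_toSet] at hp1 hp2
    rcases hends w1 w2 hne p hp1 hp2 with h | h
    · exact Or.inl ((Box.isEndpoint_iff _ _).mpr h)
    · exact Or.inr ((Box.isEndpoint_iff _ _).mpr h)
  · intro w1 w2 hne p q hc1 hc2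
    rw [Box.consecIn_iff] at hc1 hc2
    obtain ⟨m1, m2, hst⟩ := hc1
    obtain ⟨m3, m4, -⟩ := hc2
    exact gridStep_ne hst (hsingle w1 w2 hne p q m1 m3 m2 m4)
  · intro w1 w2 hne
    rw [hadj_iff w1 w2 hne]
    constructor
    · rintro ⟨z, h1, h2⟩
      exact ⟨z, (Box.mem_toSet _ _).mpr h1, (Box.mem_toSet _ _).mpr h2⟩
    · rintro ⟨z, h1, h2⟩
      exact ⟨z, (Box.mem_toSet _ _).mp h1, (Box.mem_toSet _ _).mp h2⟩
  · intro w
    exact Box.bendsAtMost_zero _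

end Master

end CPGAux

/-- If `G` is a triangle-free finite graph of maximum degree at most 3 admitting a 0-bend
CPG representation, then its 2-subdivision also admits a 0-bend CPG representation. -/
theorem twoSubdivision_is_B0_CPG (V : Type) [Fintype V] (G : SimpleGraph V)
    (htf : G.CliqueFree 3) (hdeg : ∀ v : V, (G.neighborSet v).ncard ≤ 3)
    (hG : IsBkCPG G 0) :
    IsBkCPG (twoSubdivision G) 0 := by
  classical
  obtain ⟨R, hR⟩ := hG
  choose B hmem hend hcons using fun u => CPGAux.exists_box (R.path u) (hR u)
  set idx : V → ℕ := fun v => ((Fintype.equivFin V) v : ℕ) with hidx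
  have hinj : Function.Injective idx := by
    intro x y h
    exact (Fintype.equivFin V).injective (Fin.val_injective h)
  have hadj_ex : ∀ u v, G.Adj u v → ∃ z, (B u).mem z ∧ (B v).mem z := by
    intro u v h
    obtain ⟨z, h1, h2⟩ := (R.adj_iff u v h.ne).mp h
    exact ⟨z, (hmem u z).mp h1, (hmem v z).mp h2⟩
  have hadj_of : ∀ u v, u ≠ v → (∃ z, (B u).mem z ∧ (B v).mem z) → G.Adj u v := by
    rintro u v hne ⟨z, h1, h2⟩
    exact (R.adj_iff u v hne).mpr ⟨z, (hmem u z).mpr h1, (hmem v z).mpr h2⟩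
  have huniq : ∀ u v : V, u ≠ v → ∀ z z' : ℤ×ℤ, (B u).mem z → (B v).mem z →
      (B u).mem z' → (B v).mem z' → z = z' := by
    intro u v hne z z' m1 m2 m3 m4
    by_contra hzz
    obtain ⟨w, d, hd, n1, n2, n3, n4⟩ := CPGAux.box_two_common hzz m1 m2 m3 m4
    have hstep : GridStep w (w + d) := by
      rcases hd with rfl | rfl <;> simp [GridStep]
    have hc1 : ConsecIn (R.path u).pts w (w + d) := hcons u w (w+d) n1 n2 hstep
    have hc2 : ConsecIn (R.path v).pts w (w + d) := hcons v w (w+d) n3 n4 hstep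
    exact R.no_shared_segment u v hne w (w+d) hc1 hc2
  have hGood : CPGAux.Good G B idx := by
    refine ⟨huniq, hadj_ex, hadj_of, ?_, ?_, hinj⟩
    · intro u v hne z h1 h2
      rcases R.interiorly_disjoint u v hne z ((hmem u z).mpr h1) ((hmem v z).mpr h2) with h | h
      · exact Or.inl ((hend u z).mp h)
      · exact Or.inr ((hend v z).mp h)
    · intro u v w z huv huw hvw m1 m2 m3
      have h1 : G.Adj u v := hadj_of u v huv ⟨z, m1, m2⟩
      have h2 : G.Adj u w := hadj_of u w huw ⟨z, m1, m3⟩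
      have h3 : G.Adj v w := hadj_of v w hvw ⟨z, m2, m3⟩
      exact htf {u, v, w} (SimpleGraph.is3Clique_triple_iff.mpr ⟨h1, h2, h3⟩)
  exact CPGAux.good_to_rep hGood
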